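/- Let G be a finite weighted directed graph, all whose cycles pass through edge e = (u,v), and let C_min be a cycle minimizing φ. In the iterative deletion process, if C is the first recorded cycle (the one with largest M among recorded cycles), then M(C_min) ≤ M(C): no cycle with minimum flow value has maximum edge weight exceeding that of the first recorded cycle. -/

import Mathlib

/-- A directed multigraph: edges `E` with source and target vertices in `V`. -/
structure MultiDigraph (V : Type) (E : Type) where
  src : E → V
  tgt : E → V

namespace MultiDigraph

variable {V E : Type}

/-- `G.IsWalk v u l` : the list of edges `l` forms a directed walk from `v` to `u`. -/
def IsWalk (G : MultiDigraph V E) : V → V → List E → Prop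
  | v, u, [] => v = u
  | v, u, e :: l => G.src e = v ∧ G.IsWalk (G.tgt e) u l

/-- A (directed) cycle: a nonempty closed walk. -/
def IsCycle (G : MultiDigraph V E) (l : List E) : Prop :=
  l ≠ [] ∧ ∃ x, G.IsWalk x x l

/-- minimum edge weight (critical edge value γ) along a nonempty list of edges. -/
noncomputable def minW (w : E → ℝ) (l : List E) : ℝ := ((l.map w).min?).getD 0

/-- maximum edge weight M along a nonempty list of edges. -/
noncomputable def maxW (w : E → ℝ) (l : List E) : ℝ := ((l.map w).max?).getD 0

/-- flow value φ = M − γ. -/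
noncomputable def flowVal (w : E → ℝ) (l : List E) : ℝ := maxW w l - minW w l

end MultiDigraph

namespace MultiDigraph

variable {V E : Type}

/-- The edges of `l` all lie in the edge set `F`. -/
def EdgesIn (l : List E) (F : Finset E) : Prop := ∀ f ∈ l, f ∈ F

/-- `P` is a maxflow path from `v` to `u` using only edges of `F`. -/
def IsMaxflowPathIn (G : MultiDigraph V E) (w : E → ℝ) (v u : V) (F : Finset E)
    (P : List E) : Prop :=
  G.IsWalk v u P ∧ P ≠ [] ∧ EdgesIn P F ∧
    ∀ Q, G.IsWalk v u Q → Q ≠ [] → EdgesIn Q F → minW w Q ≤ minW w P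

/-- `ProcessRun G w e u v k Es Ps`: the iterative process of Algorithm 2.
Starting from the whole graph (`Es 0 = univ`), at each step `i < k` the list
`Ps i` is a maxflow path from `v` to `u` in the current edge set `Es i`, the
cycle `Ps i ++ [e]` is recorded, and every edge other than `e` of weight
`≥ M(Ps i)` is deleted to form `Es (i+1)`. -/
def ProcessRun [Fintype E] (G : MultiDigraph V E) (w : E → ℝ) (e : E) (u v : V)
    (k : ℕ) (Es : ℕ → Finset E) (Ps : ℕ → List E) : Prop :=
  Es 0 = Finset.univ ∧
  ∀ i < k,
    G.IsMaxflowPathIn w v u (Es i) (Ps i) ∧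
    ((Es (i+1) : Set E) = {f ∈ (Es i : Set E) | ¬ (maxW w (Ps i) ≤ w f ∧ f ≠ e)})

/-- There is a cycle all of whose edges lie in `F`. -/
def HasCycleIn (G : MultiDigraph V E) (F : Finset E) : Prop :=
  ∃ C, G.IsCycle C ∧ EdgesIn C F

end MultiDigraph


namespace MultiDigraph

variable {V E : Type}

lemma isWalk_append (G : MultiDigraph V E) (l1 : List E) :
    ∀ (l2 : List E) (v u : V), G.IsWalk v u (l1 ++ l2) ↔
      ∃ x, G.IsWalk v x l1 ∧ G.IsWalk x u l2 := by
  induction l1 with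
  | nil =>
    intro l2 v u
    simp [IsWalk]
  | cons f l1 ih =>
    intro l2 v u
    constructor
    · rintro ⟨hs, h⟩
      obtain ⟨x, h1, h2⟩ := (ih l2 _ u).mp h
      exact ⟨x, ⟨hs, h1⟩, h2⟩
    · rintro ⟨x, ⟨hs, h1⟩, h2⟩
      exact ⟨hs, (ih l2 _ u).mpr ⟨x, h1, h2⟩⟩

lemma minW_spec (w : E → ℝ) {l : List E} (h : l ≠ []) :
    (∃ f ∈ l, minW w l = w f) ∧ ∀ f ∈ l, minW w l ≤ w f := by
  cases h' : (l.map w).min? with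
  | none =>
    exact absurd (List.map_eq_nil_iff.mp (List.min?_eq_none_iff.mp h')) h
  | some m =>
    have hm : minW w l = m := by simp [minW, h']
    have hmem : m ∈ l.map w := List.min?_mem h'
    obtain ⟨f, hf, hfw⟩ := List.mem_map.mp hmem
    refine ⟨⟨f, hf, by rw [hm, hfw]⟩, ?_⟩
    intro f hf
    rw [hm]
    exact (List.le_min?_iff h').mp le_rfl (w f)
      (List.mem_map.mpr ⟨f, hf, rfl⟩)

lemma maxW_spec (w : E → ℝ) {l : List E} (h : l ≠ []) :
    (∃ f ∈ l, maxW w l = w f) ∧ ∀ f ∈ l, w f ≤ maxW w l := by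
  cases h' : (l.map w).max? with
  | none =>
    exact absurd (List.map_eq_nil_iff.mp (List.max?_eq_none_iff.mp h')) h
  | some m =>
    have hm : maxW w l = m := by simp [maxW, h']
    have hmem : m ∈ l.map w := List.max?_mem h'
    obtain ⟨f, hf, hfw⟩ := List.mem_map.mp hmem
    refine ⟨⟨f, hf, by rw [hm, hfw]⟩, ?_⟩
    intro f hf
    rw [hm]
    exact (List.max?_le_iff h').mp le_rfl (w f)
      (List.mem_map.mpr ⟨f, hf, rfl⟩)

/-- if every element of l1 is an element of l2, then min of l2 ≤ min of l1. -/
lemma minW_le_minW (w : E → ℝ) {l1 l2 : List E} (h1 : l1 ≠ []) (h2 : l2 ≠ [])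
    (hsub : ∀ f ∈ l1, f ∈ l2) : minW w l2 ≤ minW w l1 := by
  obtain ⟨f, hf, hfeq⟩ := (minW_spec w h1).1
  rw [hfeq]
  exact (minW_spec w h2).2 f (hsub f hf)

end MultiDigraph

open MultiDigraph in
/-- if C_min is a cycle of minimum flow value, then its maximum
edge weight does not exceed that of the first recorded cycle `Ps 0 ++ [e]`. -/
theorem stmt_13 {V E : Type} [Fintype E] [DecidableEq E]
    (G : MultiDigraph V E) (w : E → ℝ) (e : E) (u v : V)
    (hsrc : G.src e = u) (htgt : G.tgt e = v)
    (hall : ∀ l, G.IsCycle l → e ∈ l)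
    (k : ℕ) (Es : ℕ → Finset E) (Ps : ℕ → List E)
    (hrun : G.ProcessRun w e u v k Es Ps)
    (hterm : ¬ G.HasCycleIn (Es k))
    (hk : 0 < k)
    (Cmin : List E) (hCmin : G.IsCycle Cmin)
    (hmin : ∀ C', G.IsCycle C' → flowVal w Cmin ≤ flowVal w C') :
    maxW w Cmin ≤ maxW w (Ps 0 ++ [e]) := by
  classical
  obtain ⟨hEs0, hstep⟩ := hrun
  obtain ⟨hP0walk, hP0ne, _, hP0max⟩ := (hstep 0 hk).1
  set C := Ps 0 ++ [e] with hC
  have hCne : C ≠ [] := by simp [hC]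
  have hCwalk : G.IsWalk v v C := by
    rw [hC, isWalk_append]
    exact ⟨u, hP0walk, hsrc, by simpa [IsWalk] using htgt⟩
  have hCcyc : G.IsCycle C := ⟨hCne, v, hCwalk⟩
  have heC : e ∈ C := by simp [hC]
  obtain ⟨hCmne, x, hCmwalk⟩ := id hCmin
  obtain ⟨l1, l2, hdecomp⟩ := List.append_of_mem (hall Cmin hCmin)
  -- Q = l2 ++ l1 is a walk from v to u
  obtain ⟨c, hw1, hw2⟩ := (isWalk_append G l1 (e :: l2) x x).mp (hdecomp ▸ hCmwalk)
  obtain ⟨hse, hw3⟩ := hw2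
  have hcu : c = u := by rw [← hse, hsrc]
  have hQwalk : G.IsWalk v u (l2 ++ l1) := by
    rw [isWalk_append]
    exact ⟨x, htgt ▸ hw3, hcu ▸ hw1⟩
  -- membership relations
  have hmemQ : ∀ f ∈ l2 ++ l1, f ∈ Cmin := by
    intro f hf
    rw [hdecomp]
    rcases List.mem_append.mp hf with h | h
    · simp [h]
    · simp [h]
  by_cases hQ : (l2 ++ l1) = []
  · -- Cmin = [e]
    have hl1 : l1 = [] := (List.append_eq_nil_iff.mp hQ).2
    have hl2 : l2 = [] := (List.append_eq_nil_iff.mp hQ).1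
    have : Cmin = [e] := by rw [hdecomp, hl1, hl2]; rfl
    rw [this]
    have := (maxW_spec w hCne).2 e heC
    have heq : maxW w [e] = w e := by simp [maxW]
    rw [heq]; exact this
  · -- main case
    have hQmin : minW w (l2 ++ l1) ≤ minW w (Ps 0) :=
      hP0max _ hQwalk hQ (by intro f _; rw [hEs0]; exact Finset.mem_univ f)
    have h1 : minW w Cmin ≤ minW w (l2 ++ l1) := minW_le_minW w hQ hCmne hmemQ
    have h2 : minW w Cmin ≤ w e := (minW_spec w hCmne).2 e (hall Cmin ⟨hCmne, x, hCmwalk⟩)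
    have h3 : minW w Cmin ≤ minW w C := by
      obtain ⟨f, hf, hfeq⟩ := (minW_spec w hCne).1
      rw [hfeq]
      rcases List.mem_append.mp (hC ▸ hf) with h | h
      · calc minW w Cmin ≤ minW w (Ps 0) := le_trans h1 hQmin
          _ ≤ w f := (minW_spec w hP0ne).2 f h
      · simp only [List.mem_singleton] at h
        rw [h]; exact h2
    have h4 : flowVal w Cmin ≤ flowVal w C := hmin C hCcyc
    simp only [flowVal] at h4
    linarith
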